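/- For every n ≥ 1, the n-th Labos number L_n exists (i.e., there is a smallest positive integer L with π(L) − π(⌊L/2⌋) = n), and L_n ≤ R_n, where R_n is the n-th Ramanujan prime. -/

import Mathlib

/-- The n-th Ramanujan prime: the smallest positive integer R such that for all
integers x ≥ R one has π(x) − π(⌊x/2⌋) ≥ n. -/
noncomputable def ramanujan (n : ℕ) : ℕ :=
  sInf {R : ℕ | 0 < R ∧ ∀ x : ℕ, R ≤ x →
    n ≤ Nat.primeCounting x - Nat.primeCounting (x / 2)}

/-- The n-th Labos number: the smallest positive integer L with
π(L) − π(⌊L/2⌋) = n. -/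
noncomputable def labos (n : ℕ) : ℕ :=
  sInf {L : ℕ | 0 < L ∧ Nat.primeCounting L - Nat.primeCounting (L / 2) = n}

section Asymptotics
open Real Filter Asymptotics

lemma sqrtLogLittleO : (fun y : ℝ => Real.sqrt y * Real.log y) =o[atTop] (fun y : ℝ => y) := by
  have h1 : (fun y : ℝ => Real.sqrt y * Real.log y) =o[atTop]
      (fun y : ℝ => y ^ ((1:ℝ)/2) * y ^ ((1:ℝ)/2)) := by
    refine IsBigO.mul_isLittleO ?_ (isLittleO_log_rpow_atTop (by norm_num))
    refine IsBigO.of_bound 1 ?_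
    filter_upwards [eventually_ge_atTop (0:ℝ)] with y hy
    rw [Real.sqrt_eq_rpow]
    simp
  refine h1.congr' (EventuallyEq.refl _ _) ?_
  filter_upwards [eventually_ge_atTop (0:ℝ)] with y hy
  rw [← Real.rpow_add' hy (by norm_num)]
  norm_num

lemma hLittleO (m : ℕ) : (fun x : ℝ => Real.log x + (Real.sqrt (2*x) + m) * Real.log (2*x))
    =o[atTop] (fun x : ℝ => x) := by
  have h2 : Filter.Tendsto (fun x : ℝ => 2 * x) atTop atTop :=
    (tendsto_const_mul_atTop_of_pos two_pos).mpr tendsto_id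
  have hlog2x : (fun x : ℝ => Real.log (2*x)) =o[atTop] (fun x : ℝ => x) := by
    have := Real.isLittleO_log_id_atTop.comp_tendsto h2
    simp only [Function.comp_def] at this
    exact this.trans_isBigO (isBigO_const_mul_self 2 _ _)
  have hsq : (fun x : ℝ => Real.sqrt (2*x) * Real.log (2*x)) =o[atTop] (fun x : ℝ => x) := by
    have := sqrtLogLittleO.comp_tendsto h2
    simp only [Function.comp_def] at this
    exact this.trans_isBigO (isBigO_const_mul_self 2 _ _)
  have hm : (fun x : ℝ => (m:ℝ) * Real.log (2*x)) =o[atTop] (fun x : ℝ => x) :=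
    hlog2x.const_mul_left _
  have key := Real.isLittleO_log_id_atTop.add (hsq.add hm)
  have heq : (fun x : ℝ => Real.log x + (Real.sqrt (2*x) + m) * Real.log (2*x))
      = fun x : ℝ => Real.log x + (Real.sqrt (2*x) * Real.log (2*x) + m * Real.log (2*x)) := by
    funext x; ring
  rw [heq]
  exact key

lemma realIneq (m : ℕ) : ∀ᶠ x : ℝ in atTop,
    x * (2*x) ^ (Real.sqrt (2*x) + m) * 4 ^ (2*x/3) ≤ (4:ℝ) ^ x := by
  have hc : (0:ℝ) < Real.log 4 / 3 := by positivity
  filter_upwards [(hLittleO m).bound hc, eventually_ge_atTop (1:ℝ)] with x hx hx1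
  have hx0 : (0:ℝ) < x := by linarith
  have h2x : (0:ℝ) < 2*x := by linarith
  rw [← Real.log_le_log_iff (by positivity) (by positivity)]
  rw [Real.log_mul (by positivity) (by positivity), Real.log_mul (by positivity) (by positivity),
    Real.log_rpow h2x, Real.log_rpow (by norm_num), Real.log_rpow (by norm_num)]
  have hb : Real.log x + (Real.sqrt (2*x) + m) * Real.log (2*x) ≤ Real.log 4 / 3 * x := by
    calc Real.log x + (Real.sqrt (2*x) + m) * Real.log (2*x)
        ≤ ‖Real.log x + (Real.sqrt (2*x) + m) * Real.log (2*x)‖ := le_norm_self _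
      _ ≤ Real.log 4 / 3 * ‖x‖ := hx
      _ = Real.log 4 / 3 * x := by rw [Real.norm_of_nonneg hx0.le]
  nlinarith [Real.log_nonneg (by norm_num : (1:ℝ) ≤ 4)]

lemma natMainIneq (m : ℕ) : ∃ N : ℕ, 512 ≤ N ∧ ∀ n : ℕ, N ≤ n →
    n * (2*n) ^ (Nat.sqrt (2*n) + m) * 4 ^ (2*n/3) ≤ 4 ^ n := by
  obtain ⟨X, hX⟩ := (realIneq m).exists_forall_of_atTop
  refine ⟨max 512 ⌈X⌉₊, le_max_left _ _, fun n hn => ?_⟩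
  have h512 : 512 ≤ n := le_trans (le_max_left _ _) hn
  have hXn : X ≤ (n:ℝ) := le_trans (Nat.le_ceil X) (by exact_mod_cast le_trans (le_max_right _ _) hn)
  have key := hX n hXn
  rw [← @Nat.cast_le ℝ]
  push_cast
  simp only [← Real.rpow_natCast]
  refine le_trans ?_ key
  gcongr
  · have h1n : (1:ℕ) ≤ 2 * n := by omega
    exact_mod_cast h1n
  · calc ((Nat.sqrt (2*n) + m : ℕ) : ℝ) = (Nat.sqrt (2*n) : ℝ) + m := by push_cast; ring
      _ ≤ Real.sqrt (2*n) + m := by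
          have := Real.nat_sqrt_le_real_sqrt (a := 2*n)
          push_cast at this ⊢
          linarith
  · norm_num
  · exact_mod_cast Nat.cast_div_le.trans (by norm_cast)

end Asymptotics

section Counting
open Nat Finset

lemma centralBinom_le_count (n : ℕ) (n_large : 2 < n) :
    centralBinom n ≤ ((2*n) ^ Nat.sqrt (2*n) * 4 ^ (2*n/3)) *
      (2*n) ^ (((Finset.Ioc n (2*n)).filter Nat.Prime).card) := by
  have n_pos : 0 < n := by omega
  have n2_pos : 1 ≤ 2 * n := by omega
  let f := fun x => x ^ n.centralBinom.factorization x
  have hsplit : (∏ p ∈ Finset.range (2*n/3+1), f p) *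
      (∏ p ∈ Finset.Ico (2*n/3+1) (2*n+1), f p) = ∏ p ∈ Finset.range (2*n+1), f p := by
    rw [Finset.range_eq_Ico, Finset.range_eq_Ico]
    exact Finset.prod_Ico_consecutive f (m := 0) (n := 2*n/3+1) (k := 2*n+1) (by omega) (by omega)
  rw [← prod_pow_factorization_centralBinom n, ← hsplit]
  apply Nat.mul_le_mul
  · -- first block: copy of mathlib's argument
    let S := (Finset.range (2 * n / 3 + 1)).filter Nat.Prime
    have : ∏ x ∈ S, f x = ∏ x ∈ Finset.range (2 * n / 3 + 1), f x := by
      refine Finset.prod_filter_of_ne fun p _ h => ?_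
      contrapose! h; dsimp only [f]
      rw [factorization_eq_zero_of_not_prime n.centralBinom h, _root_.pow_zero]
    rw [← this, ← Finset.prod_filter_mul_prod_filter_not S (· ≤ Nat.sqrt (2 * n))]
    apply Nat.mul_le_mul
    · refine (Finset.prod_le_prod' fun p _ => (?_ : f p ≤ 2 * n)).trans ?_
      · exact pow_factorization_choose_le (by omega)
      have : (Finset.Icc 1 (Nat.sqrt (2 * n))).card = Nat.sqrt (2 * n) := by
        rw [card_Icc, Nat.add_sub_cancel]
      rw [Finset.prod_const]
      refine pow_right_mono₀ n2_pos ((Finset.card_le_card fun x hx => ?_).trans this.le)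
      obtain ⟨h1, h2⟩ := Finset.mem_filter.1 hx
      exact Finset.mem_Icc.mpr ⟨(Finset.mem_filter.1 h1).2.one_lt.le, h2⟩
    · refine le_trans ?_ (primorial_le_4_pow (2 * n / 3))
      refine (Finset.prod_le_prod' fun p hp => (?_ : f p ≤ p)).trans ?_
      · obtain ⟨h1, h2⟩ := Finset.mem_filter.1 hp
        refine (pow_right_mono₀ (Finset.mem_filter.1 h1).2.one_lt.le ?_).trans (pow_one p).le
        exact Nat.factorization_choose_le_one (sqrt_lt'.mp <| not_le.1 h2)
      refine Finset.prod_le_prod_of_subset_of_one_le' (Finset.filter_subset _ _) ?_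
      exact fun p hp _ => (Finset.mem_filter.1 hp).2.one_lt.le
  · -- second block: primes in (n, 2n]
    have heq : ∏ p ∈ (Finset.Ico (2*n/3+1) (2*n+1)).filter (fun p => p.Prime ∧ n < p), f p
        = ∏ p ∈ Finset.Ico (2*n/3+1) (2*n+1), f p := by
      refine Finset.prod_filter_of_ne fun p hp h => ?_
      have hprime : p.Prime := by
        by_contra hnp
        apply h
        show p ^ n.centralBinom.factorization p = 1
        rw [factorization_eq_zero_of_not_prime n.centralBinom hnp, _root_.pow_zero]
      refine ⟨hprime, ?_⟩
      by_contra hle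
      push_neg at hle
      apply h
      show p ^ n.centralBinom.factorization p = 1
      have hbig : 2 * n < 3 * p := by
        have := (Finset.mem_Ico.1 hp).1
        omega
      rw [factorization_centralBinom_of_two_mul_self_lt_three_mul n_large hle hbig,
        _root_.pow_zero]
    rw [← heq]
    calc ∏ p ∈ (Finset.Ico (2*n/3+1) (2*n+1)).filter (fun p => p.Prime ∧ n < p), f p
        ≤ (2*n) ^ ((Finset.Ico (2*n/3+1) (2*n+1)).filter (fun p => p.Prime ∧ n < p)).card := by
          apply Finset.prod_le_pow_card
          intro x hx
          exact pow_factorization_choose_le (by omega)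
      _ ≤ (2*n) ^ (((Finset.Ioc n (2*n)).filter Nat.Prime).card) := by
          apply Nat.pow_le_pow_right (by omega)
          apply Finset.card_le_card
          intro p hp
          obtain ⟨hmem, hprime, hlt⟩ := Finset.mem_filter.1 hp
          have := Finset.mem_Ico.1 hmem
          exact Finset.mem_filter.2 ⟨Finset.mem_Ioc.2 ⟨hlt, by omega⟩, hprime⟩

lemma count_primes_Ioc (m : ℕ) : ∃ N : ℕ, ∀ n : ℕ, N ≤ n →
    m ≤ ((Finset.Ioc n (2*n)).filter Nat.Prime).card := by
  obtain ⟨N, hN512, hN⟩ := natMainIneq m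
  refine ⟨N, fun n hn => ?_⟩
  have h512 : 512 ≤ n := le_trans hN512 hn
  by_contra hk
  push_neg at hk
  set k := ((Finset.Ioc n (2*n)).filter Nat.Prime).card with hkdef
  have H2 : 4 ^ n < n * centralBinom n :=
    Nat.four_pow_lt_mul_centralBinom n (by omega)
  have H3 := centralBinom_le_count n (by omega)
  have chain : n * centralBinom n ≤ 4 ^ n := by
    calc n * centralBinom n
        ≤ n * (((2*n) ^ Nat.sqrt (2*n) * 4 ^ (2*n/3)) * (2*n) ^ k) :=
          Nat.mul_le_mul_left n H3
      _ ≤ n * (((2*n) ^ Nat.sqrt (2*n) * 4 ^ (2*n/3)) * (2*n) ^ m) := by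
          refine Nat.mul_le_mul_left n (Nat.mul_le_mul_left _ ?_)
          exact Nat.pow_le_pow_right (by omega) (by omega)
      _ = n * (2*n) ^ (Nat.sqrt (2*n) + m) * 4 ^ (2*n/3) := by ring
      _ ≤ 4 ^ n := hN n hn
  omega

lemma primeCounting_two_mul (n : ℕ) :
    Nat.primeCounting (2*n) = Nat.primeCounting n + ((Finset.Ioc n (2*n)).filter Nat.Prime).card := by
  rw [Nat.primeCounting, Nat.primeCounting, Nat.primeCounting',
    Nat.count_eq_card_filter_range, Nat.count_eq_card_filter_range]
  have hsplit : Finset.range (2*n+1) = Finset.range (n+1) ∪ Finset.Ico (n+1) (2*n+1) := by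
    ext x
    simp [Finset.mem_range, Finset.mem_union, Finset.mem_Ico]
    omega
  have hIoc : Finset.Ico (n+1) (2*n+1) = Finset.Ioc n (2*n) := by
    ext x; simp [Finset.mem_Ico, Finset.mem_Ioc]
  rw [hsplit, Finset.filter_union, Finset.card_union_of_disjoint, hIoc]
  exact Finset.disjoint_filter_filter (by
    rw [Finset.range_eq_Ico]
    exact Finset.Ico_disjoint_Ico_consecutive 0 (n+1) (2*n+1))

lemma primeCounting_succ_le (k : ℕ) :
    Nat.primeCounting (k+1) ≤ Nat.primeCounting k + 1 := by
  unfold Nat.primeCounting Nat.primeCounting'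
  rw [Nat.count_succ]
  split <;> omega

end Counting

/-- For every n ≥ 1, the n-th Labos number exists (there is a smallest positive
integer L with π(L) − π(⌊L/2⌋) = n), and L_n ≤ R_n. -/
theorem labos_exists_and_le_ramanujan (n : ℕ) (hn : 1 ≤ n) :
    (∃ L : ℕ, 0 < L ∧ Nat.primeCounting L - Nat.primeCounting (L / 2) = n ∧
      ∀ L' : ℕ, 0 < L' → Nat.primeCounting L' - Nat.primeCounting (L' / 2) = n →
        L ≤ L') ∧
    labos n ≤ ramanujan n := by
  -- the Ramanujan set is nonempty
  obtain ⟨N, hN⟩ := count_primes_Ioc n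
  have hRam : (2*N + 2) ∈ {R : ℕ | 0 < R ∧ ∀ x : ℕ, R ≤ x →
      n ≤ Nat.primeCounting x - Nat.primeCounting (x / 2)} := by
    refine ⟨by omega, fun x hx => ?_⟩
    have hk : N ≤ x / 2 := by omega
    have h1 : Nat.primeCounting (x/2) + n ≤ Nat.primeCounting (2 * (x/2)) := by
      rw [primeCounting_two_mul]
      have := hN (x/2) hk
      omega
    have h2 : Nat.primeCounting (2 * (x/2)) ≤ Nat.primeCounting x :=
      Nat.monotone_primeCounting (by omega)
    omega
  have hne : {R : ℕ | 0 < R ∧ ∀ x : ℕ, R ≤ x →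
      n ≤ Nat.primeCounting x - Nat.primeCounting (x / 2)}.Nonempty := ⟨_, hRam⟩
  have hRmem := Nat.sInf_mem hne
  set R := ramanujan n with hRdef
  obtain ⟨hRpos', hRprop'⟩ := hRmem
  have hRpos : 0 < R := hRpos'
  have hRprop : ∀ x : ℕ, R ≤ x → n ≤ Nat.primeCounting x - Nat.primeCounting (x / 2) := hRprop'
  have hfR : n ≤ Nat.primeCounting R - Nat.primeCounting (R / 2) := hRprop R le_rfl
  -- R is at least 2
  have hR2 : 2 ≤ R := by
    by_contra h
    have hR1 : R = 1 := by omega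
    have h10 : Nat.primeCounting 1 = 0 := by simp
    have h00 : Nat.primeCounting 0 = 0 := by simp
    have := hfR
    rw [hR1] at this
    norm_num [h10, h00] at this
    omega
  -- f R = n
  have hfReq : Nat.primeCounting R - Nat.primeCounting (R / 2) = n := by
    by_contra hne'
    have hgt : n + 1 ≤ Nat.primeCounting R - Nat.primeCounting (R / 2) := by omega
    -- show R - 1 is in the Ramanujan set, contradicting minimality
    have hmono : Nat.primeCounting (R/2) ≤ Nat.primeCounting R :=
      Nat.monotone_primeCounting (Nat.div_le_self _ _)
    have h1 : Nat.primeCounting (R/2) + n + 1 ≤ Nat.primeCounting R := by omega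
    have h2 : Nat.primeCounting R ≤ Nat.primeCounting (R-1) + 1 := by
      have := primeCounting_succ_le (R-1)
      have hRR : R - 1 + 1 = R := by omega
      rwa [hRR] at this
    have h3 : Nat.primeCounting ((R-1)/2) ≤ Nat.primeCounting (R/2) :=
      Nat.monotone_primeCounting (Nat.div_le_div_right (by omega))
    have hfR1 : n ≤ Nat.primeCounting (R-1) - Nat.primeCounting ((R-1)/2) := by omega
    have hmem : (R-1) ∈ {R : ℕ | 0 < R ∧ ∀ x : ℕ, R ≤ x →
        n ≤ Nat.primeCounting x - Nat.primeCounting (x / 2)} := by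
      refine ⟨by omega, fun x hx => ?_⟩
      rcases Nat.lt_or_ge x R with hlt | hge
      · have : x = R - 1 := by omega
        rw [this]; exact hfR1
      · exact hRprop x hge
    have hle : R ≤ R - 1 := Nat.sInf_le hmem
    omega
  -- the Labos set is nonempty, containing R
  have hLmem : R ∈ {L : ℕ | 0 < L ∧ Nat.primeCounting L - Nat.primeCounting (L / 2) = n} :=
    ⟨hRpos, hfReq⟩
  have hLne : {L : ℕ | 0 < L ∧
      Nat.primeCounting L - Nat.primeCounting (L / 2) = n}.Nonempty := ⟨_, hLmem⟩
  obtain ⟨hLpos, hLeq⟩ := Nat.sInf_mem hLne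
  refine ⟨⟨labos n, hLpos, hLeq, fun L' h1 h2 => Nat.sInf_le ⟨h1, h2⟩⟩, Nat.sInf_le hLmem⟩
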